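/- Let Λ be a numerical semigroup with genus g, conductor c and enumeration λ. For each index i let g(i) be the number of gaps smaller than λ_i, let D(i) = {l ∈ ℕ \ Λ : λ_i - l ∈ ℕ \ Λ}, and let ν_i = #{j : λ_i - λ_j ∈ Λ}. Then ν_i = i - g(i) + #D(i) + 1 for all i; in particular ν_i = i - g + 1 for all i ≥ 2c - g - 1. -/

import Mathlib

structure NumericalSemigroup where
  carrier : Set ℕ
  zero_mem : 0 ∈ carrier
  add_mem : ∀ {a b : ℕ}, a ∈ carrier → b ∈ carrier → a + b ∈ carrier
  finite_compl : Set.Finite carrierᶜ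

namespace NumericalSemigroup

/-- The genus: the number of gaps. -/
noncomputable def genus (Λ : NumericalSemigroup) : ℕ := Λ.carrierᶜ.ncard

/-- The conductor: the smallest `c` with `c + ℕ ⊆ Λ`. -/
noncomputable def conductor (Λ : NumericalSemigroup) : ℕ := sInf {c : ℕ | ∀ n, c ≤ n → n ∈ Λ.carrier}

/-- `f` is the (unique) increasing enumeration of `Λ`. -/
noncomputable def IsEnum (Λ : NumericalSemigroup) (f : ℕ → ℕ) : Prop :=
  StrictMono f ∧ Set.range f = Λ.carrier

/-- The Arf property: `λ_i + λ_j - λ_k ∈ Λ` for all `i ≥ j ≥ k`. -/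
noncomputable def IsArf (Λ : NumericalSemigroup) : Prop :=
  ∀ f : ℕ → ℕ, Λ.IsEnum f → ∀ i j k : ℕ, k ≤ j → j ≤ i → f i + f j - f k ∈ Λ.carrier

end NumericalSemigroup

/-- `ν_i = #{j : λ_i - λ_j ∈ Λ}`, for `f` the enumeration of `Λ`. -/
noncomputable def NumericalSemigroup.nu (Λ : NumericalSemigroup) (f : ℕ → ℕ) (i : ℕ) : ℕ :=
  {j : ℕ | j ≤ i ∧ f i - f j ∈ Λ.carrier}.ncard

theorem stmt15 (Λ : NumericalSemigroup) (f : ℕ → ℕ) (hf : Λ.IsEnum f) :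
    (∀ i : ℕ, Λ.nu f i + (Λ.carrierᶜ ∩ Set.Iio (f i)).ncard =
      i + ({l : ℕ | l ∉ Λ.carrier ∧ f i - l ∉ Λ.carrier}).ncard + 1) ∧
    (∀ i : ℕ, 2 * Λ.conductor ≤ i + Λ.genus + 1 → Λ.nu f i + Λ.genus = i + 1) := by
  classical
  obtain ⟨hmono, hrange⟩ := hf
  have hmem : ∀ j, f j ∈ Λ.carrier := by
    intro j; rw [← hrange]; exact Set.mem_range_self j
  have main : ∀ i : ℕ,
      (Λ.nu f i + (Λ.carrierᶜ ∩ Set.Iio (f i)).ncard =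
        i + ({l : ℕ | l ∉ Λ.carrier ∧ f i - l ∉ Λ.carrier}).ncard + 1) ∧
      f i = i + (Λ.carrierᶜ ∩ Set.Iio (f i)).ncard ∧
      (Λ.carrier ∩ Set.Iic (f i)).ncard = i + 1 := by
    intro i
    set s := f i with hs
    set T : Finset ℕ := Finset.range (s+1) with hT
    set X : Finset ℕ := T.filter (fun l => l ∈ Λ.carrier) with hX
    set Y : Finset ℕ := T.filter (fun l => s - l ∈ Λ.carrier) with hY
    have hXcard : X.card = i + 1 := by
      have himg : X = (Finset.range (i+1)).image f := by
        ext l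
        simp only [hX, hT, Finset.mem_filter, Finset.mem_range, Finset.mem_image,
          Nat.lt_succ_iff]
        constructor
        · rintro ⟨hls, hl⟩
          obtain ⟨j, rfl⟩ : l ∈ Set.range f := by rw [hrange]; exact hl
          exact ⟨j, hmono.le_iff_le.mp hls, rfl⟩
        · rintro ⟨j, hj, rfl⟩
          exact ⟨hmono.le_iff_le.mpr hj, hmem j⟩
      rw [himg, Finset.card_image_of_injective _ hmono.injective, Finset.card_range]
    have hXcoe : (X : Set ℕ) = Λ.carrier ∩ Set.Iic s := by
      ext l
      simp only [hX, hT, Finset.coe_filter, Finset.mem_range, Set.mem_setOf_eq,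
        Set.mem_inter_iff, Set.mem_Iic, Nat.lt_succ_iff]
      tauto
    have hnu : Λ.nu f i = (X.filter (fun l => s - l ∈ Λ.carrier)).card := by
      have hset : {j : ℕ | j ≤ i ∧ f i - f j ∈ Λ.carrier}
          = ↑((Finset.range (i+1)).filter (fun j => s - f j ∈ Λ.carrier)) := by
        ext j
        simp only [Set.mem_setOf_eq, Finset.coe_filter, Finset.mem_range, Nat.lt_succ_iff]
        exact Iff.rfl
      have himg : ((Finset.range (i+1)).filter (fun j => s - f j ∈ Λ.carrier)).image f
            = X.filter (fun l => s - l ∈ Λ.carrier) := by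
        ext l
        simp only [Finset.mem_image, Finset.mem_filter, Finset.mem_range, hX, hT,
          Nat.lt_succ_iff]
        constructor
        · rintro ⟨j, ⟨hj, hjΛ⟩, rfl⟩
          exact ⟨⟨hmono.le_iff_le.mpr hj, hmem j⟩, hjΛ⟩
        · rintro ⟨⟨hls, hl⟩, hsl⟩
          obtain ⟨j, rfl⟩ : l ∈ Set.range f := by rw [hrange]; exact hl
          exact ⟨j, ⟨hmono.le_iff_le.mp hls, hsl⟩, rfl⟩
      rw [NumericalSemigroup.nu, hset, Set.ncard_coe_finset, ← himg,
        Finset.card_image_of_injective _ hmono.injective]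
    have hYcard : Y.card = i + 1 := by
      have himg : Y.image (fun l => s - l) = X := by
        ext l
        simp only [Finset.mem_image, hX, hY, hT, Finset.mem_filter, Finset.mem_range,
          Nat.lt_succ_iff]
        constructor
        · rintro ⟨m, ⟨hm, hm2⟩, rfl⟩
          exact ⟨Nat.sub_le _ _, hm2⟩
        · rintro ⟨hl, hlΛ⟩
          exact ⟨s - l, ⟨Nat.sub_le _ _, by rw [Nat.sub_sub_self hl]; exact hlΛ⟩,
            Nat.sub_sub_self hl⟩
      have hinj : (Y.image (fun l => s - l)).card = Y.card := by
        apply Finset.card_image_of_injOn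
        intro a ha b hb hab
        simp only [hY, hT, Finset.mem_coe, Finset.mem_filter, Finset.mem_range,
          Nat.lt_succ_iff] at ha hb
        have hab' : s - a = s - b := hab
        clear hab
        omega
      rw [← hinj, himg, hXcard]
    -- splits
    have hsplitT : X.card + (T.filter (fun l => ¬ l ∈ Λ.carrier)).card = T.card :=
      Finset.card_filter_add_card_filter_not _
    have hsplitY : (Y.filter (fun l => l ∈ Λ.carrier)).card
        + (Y.filter (fun l => ¬ l ∈ Λ.carrier)).card = Y.card :=
      Finset.card_filter_add_card_filter_not _
    have hsplitZ : ((T.filter (fun l => ¬ l ∈ Λ.carrier)).filter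
          (fun l => s - l ∈ Λ.carrier)).card
        + ((T.filter (fun l => ¬ l ∈ Λ.carrier)).filter
          (fun l => ¬ s - l ∈ Λ.carrier)).card
        = (T.filter (fun l => ¬ l ∈ Λ.carrier)).card :=
      Finset.card_filter_add_card_filter_not _
    have hcomm1 : Y.filter (fun l => l ∈ Λ.carrier) = X.filter (fun l => s - l ∈ Λ.carrier) := by
      rw [hY, hX, Finset.filter_comm]
    have hcomm2 : Y.filter (fun l => ¬ l ∈ Λ.carrier)
        = (T.filter (fun l => ¬ l ∈ Λ.carrier)).filter (fun l => s - l ∈ Λ.carrier) := by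
      rw [hY, Finset.filter_comm]
    have hTcard : T.card = s + 1 := Finset.card_range _
    -- coercions for the gap sets
    have hGcoe : ((T.filter (fun l => ¬ l ∈ Λ.carrier)) : Set ℕ)
        = Λ.carrierᶜ ∩ Set.Iio s := by
      ext l
      simp only [Finset.coe_filter, hT, Finset.mem_range, Set.mem_setOf_eq,
        Set.mem_inter_iff, Set.mem_compl_iff, Set.mem_Iio, Nat.lt_succ_iff]
      constructor
      · rintro ⟨hls, hl⟩
        refine ⟨hl, lt_of_le_of_ne hls ?_⟩
        rintro rfl
        exact hl (hmem i)
      · rintro ⟨hl, hls⟩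
        exact ⟨le_of_lt hls, hl⟩
    have hDcoe : (((T.filter (fun l => ¬ l ∈ Λ.carrier)).filter
          (fun l => ¬ s - l ∈ Λ.carrier)) : Set ℕ)
        = {l : ℕ | l ∉ Λ.carrier ∧ f i - l ∉ Λ.carrier} := by
      ext l
      simp only [Finset.coe_filter, Finset.mem_coe, Finset.mem_filter, hT, Finset.mem_range,
        Set.mem_setOf_eq, Nat.lt_succ_iff]
      constructor
      · rintro ⟨⟨hls, hl⟩, hsl⟩
        exact ⟨hl, hsl⟩
      · rintro ⟨hl, hsl⟩
        refine ⟨⟨?_, hl⟩, hsl⟩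
        by_contra hgt
        exact hsl (by rw [Nat.sub_eq_zero_of_le (by omega : s ≤ l)]; exact Λ.zero_mem)
    have hG : (Λ.carrierᶜ ∩ Set.Iio (f i)).ncard
        = (T.filter (fun l => ¬ l ∈ Λ.carrier)).card := by
      rw [← hs, ← hGcoe, Set.ncard_coe_finset]
    have hD : ({l : ℕ | l ∉ Λ.carrier ∧ f i - l ∉ Λ.carrier}).ncard
        = ((T.filter (fun l => ¬ l ∈ Λ.carrier)).filter
          (fun l => ¬ s - l ∈ Λ.carrier)).card := by
      rw [← hDcoe, Set.ncard_coe_finset]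
    have hIc : (Λ.carrier ∩ Set.Iic (f i)).ncard = i + 1 := by
      rw [← hs, ← hXcoe, Set.ncard_coe_finset, hXcard]
    refine ⟨?_, ?_, hIc⟩
    · rw [hnu, hG, hD]
      rw [hcomm1] at hsplitY
      rw [hcomm2] at hsplitY
      omega
    · rw [hG]
      omega
  -- conductor facts
  have hcne : {x : ℕ | ∀ n, x ≤ n → n ∈ Λ.carrier}.Nonempty := by
    refine ⟨Λ.finite_compl.toFinset.sup id + 1, fun n hn => ?_⟩
    by_contra hnot
    have h1 : n ∈ Λ.finite_compl.toFinset := Λ.finite_compl.mem_toFinset.mpr hnot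
    have h2 := Finset.le_sup (f := id) h1
    simp only [id] at h2
    omega
  have hc : ∀ n, Λ.conductor ≤ n → n ∈ Λ.carrier := Nat.sInf_mem hcne
  have hgap : ∀ l, l ∉ Λ.carrier → l < Λ.conductor := by
    intro l hl
    by_contra h
    exact hl (hc l (by omega))
  have hWcard : (Finset.filter (fun l => l ∈ Λ.carrier) (Finset.range Λ.conductor)).card
      + Λ.genus = Λ.conductor := by
    have hcoe : ↑(Finset.filter (fun l => ¬ l ∈ Λ.carrier) (Finset.range Λ.conductor))
        = Λ.carrierᶜ := by
      ext l
      simp only [Finset.coe_filter, Finset.mem_range, Set.mem_setOf_eq, Set.mem_compl_iff]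
      exact ⟨fun h => h.2, fun h => ⟨hgap l h, h⟩⟩
    have hgc : (Finset.filter (fun l => ¬ l ∈ Λ.carrier) (Finset.range Λ.conductor)).card
        = Λ.genus := by
      rw [NumericalSemigroup.genus, ← hcoe, Set.ncard_coe_finset]
    have hsp := Finset.card_filter_add_card_filter_not
      (s := Finset.range Λ.conductor) (p := fun l => l ∈ Λ.carrier)
    rw [Finset.card_range] at hsp
    omega
  refine ⟨fun i => (main i).1, fun i hbig => ?_⟩
  obtain ⟨m1, m2, m3⟩ := main i
  have hfc : Λ.conductor ≤ f i := by
    by_contra h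
    push_neg at h
    have hsub : Λ.carrier ∩ Set.Iic (f i)
        ⊆ ↑(Finset.filter (fun l => l ∈ Λ.carrier) (Finset.range Λ.conductor)) := by
      rintro l ⟨h1, h2⟩
      simp only [Finset.coe_filter, Finset.mem_range, Set.mem_setOf_eq]
      exact ⟨lt_of_le_of_lt h2 h, h1⟩
    have hle := Set.ncard_le_ncard hsub (Finset.finite_toSet _)
    rw [m3, Set.ncard_coe_finset] at hle
    omega
  have hGfull : Λ.carrierᶜ ∩ Set.Iio (f i) = Λ.carrierᶜ := by
    ext l
    simp only [Set.mem_inter_iff, Set.mem_compl_iff, Set.mem_Iio]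
    exact ⟨fun h => h.1, fun h => ⟨h, lt_of_lt_of_le (hgap l h) hfc⟩⟩
  rw [hGfull] at m1 m2
  have hDempty : {l : ℕ | l ∉ Λ.carrier ∧ f i - l ∉ Λ.carrier} = ∅ := by
    ext l
    simp only [Set.mem_setOf_eq, Set.mem_empty_iff_false, iff_false, not_and]
    intro h1 h2
    have hl := hgap l h1
    have hfl := hgap _ h2
    have hne : f i - l ≠ 0 := fun h0 => h2 (h0 ▸ Λ.zero_mem)
    have hgdef : Λ.carrierᶜ.ncard = Λ.genus := rfl
    rw [hgdef] at m2
    omega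
  rw [hDempty, Set.ncard_empty] at m1
  have hgdef : Λ.carrierᶜ.ncard = Λ.genus := rfl
  rw [hgdef] at m1
  omega
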